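/- Let F be the free group on generators a₁, …, aₙ, b (n ≥ 1), R the normal closure in F of {a₁, …, aₙ} ∪ [F,F], and S the normal closure in F of {a₁², …, aₙ², b} ∪ [F,F]. Then the images of the commutators [a₁,b], …, [aₙ,b] in the quotient (R∩S)/(R'·S') generate a subgroup isomorphic to (ℤ/2ℤ)ⁿ. -/

import Mathlib

/-- The free group on generators `a₁, …, aₙ, b`. -/
abbrev FG (n : ℕ) := FreeGroup (Fin n ⊕ Unit)

/-- The generators `a i`. -/
def agen (n : ℕ) (i : Fin n) : FG n := FreeGroup.of (Sum.inl i)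

/-- The generator `b`. -/
def bgen (n : ℕ) : FG n := FreeGroup.of (Sum.inr ())

/-- `R`, the normal closure of `{a₁, …, aₙ} ∪ [F,F]` in `F`. -/
abbrev Rsub (n : ℕ) : Subgroup (FG n) :=
  Subgroup.normalClosure (Set.range (agen n) ∪ (commutator (FG n) : Set (FG n)))

/-- `S`, the normal closure of `{a₁², …, aₙ², b} ∪ [F,F]` in `F`. -/
abbrev Ssub (n : ℕ) : Subgroup (FG n) :=
  Subgroup.normalClosure
    ((Set.range fun i => agen n i ^ 2) ∪ {bgen n} ∪ (commutator (FG n) : Set (FG n)))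

/-- Each commutator `[aᵢ, b] = aᵢ⁻¹ b⁻¹ aᵢ b` lies in `R ∩ S`. -/
theorem ab_mem (n : ℕ) (i : Fin n) :
    (agen n i)⁻¹ * (bgen n)⁻¹ * agen n i * bgen n ∈ Rsub n ⊓ Ssub n := by
  have hc : (agen n i)⁻¹ * (bgen n)⁻¹ * agen n i * bgen n ∈ commutator (FG n) := by
    have h := Subgroup.commutator_mem_commutator
      (Subgroup.mem_top (agen n i)⁻¹) (Subgroup.mem_top (bgen n)⁻¹)
    rw [commutator_def]
    simpa [commutatorElement_def, mul_assoc] using h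
  exact ⟨Subgroup.subset_normalClosure (Or.inr hc),
    Subgroup.subset_normalClosure (Or.inr hc)⟩

def pi1 : DihedralGroup 4 →* Multiplicative (ZMod 2) where
  toFun x := Multiplicative.ofAdd (match x with
    | .r k => (k.val : ZMod 2)
    | .sr k => (k.val : ZMod 2))
  map_one' := by decide
  map_mul' := by decide

def pi2 : DihedralGroup 4 →* Multiplicative (ZMod 2) where
  toFun x := Multiplicative.ofAdd (match x with
    | .r _ => 0
    | .sr _ => 1)
  map_one' := by decide
  map_mul' := by decide

lemma pi1_comm : ∀ u v : DihedralGroup 4, pi1 u = 1 → pi1 v = 1 → u * v = v * u := by decide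
lemma pi2_comm : ∀ u v : DihedralGroup 4, pi2 u = 1 → pi2 v = 1 → u * v = v * u := by decide

abbrev Gn (n : ℕ) := Fin n → DihedralGroup 4

def fgen (n : ℕ) : (Fin n ⊕ Unit) → Gn n
  | Sum.inl i => fun j => if j = i then DihedralGroup.r 1 else 1
  | Sum.inr _ => fun _ => DihedralGroup.sr 0

def θmap (n : ℕ) : FG n →* Gn n := FreeGroup.lift (fgen n)

def ρmap (n : ℕ) : Gn n →* (Fin n → Multiplicative (ZMod 2)) where
  toFun g := fun j => pi2 (g j)
  map_one' := by funext j; simpa using map_one pi2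
  map_mul' x y := by funext j; simpa using map_mul pi2 (x j) (y j)

def σmap (n : ℕ) : Gn n →* (Fin n → Multiplicative (ZMod 2)) where
  toFun g := fun j => pi1 (g j)
  map_one' := by funext j; simpa using map_one pi1
  map_mul' x y := by funext j; simpa using map_mul pi1 (x j) (y j)

lemma θ_agen (n : ℕ) (i : Fin n) : θmap n (agen n i) = fgen n (Sum.inl i) :=
  FreeGroup.lift_apply_of

lemma θ_bgen (n : ℕ) : θmap n (bgen n) = fgen n (Sum.inr ()) :=
  FreeGroup.lift_apply_of

lemma R_le (n : ℕ) : Rsub n ≤ Subgroup.comap (θmap n) (ρmap n).ker := by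
  haveI : ((ρmap n).ker.comap (θmap n)).Normal := (MonoidHom.normal_ker _).comap _
  apply Subgroup.normalClosure_le_normal
  rintro x (⟨i, rfl⟩ | hx)
  · have : (ρmap n) (θmap n (agen n i)) = 1 := by
      rw [θ_agen]
      funext j
      show pi2 (if j = i then DihedralGroup.r 1 else 1) = 1
      split <;> decide
    exact Subgroup.mem_comap.mpr (MonoidHom.mem_ker.mpr this)
  · have : ((ρmap n).comp (θmap n)) x = 1 :=
      Abelianization.commutator_subset_ker ((ρmap n).comp (θmap n)) hx
    exact Subgroup.mem_comap.mpr (MonoidHom.mem_ker.mpr this)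

lemma S_le (n : ℕ) : Ssub n ≤ Subgroup.comap (θmap n) (σmap n).ker := by
  haveI : ((σmap n).ker.comap (θmap n)).Normal := (MonoidHom.normal_ker _).comap _
  apply Subgroup.normalClosure_le_normal
  rintro x ((⟨i, rfl⟩ | rfl) | hx)
  · have : (σmap n) (θmap n (agen n i ^ 2)) = 1 := by
      rw [map_pow, θ_agen]
      funext j
      show pi1 ((if j = i then DihedralGroup.r 1 else 1) ^ 2) = 1
      split <;> decide
    exact Subgroup.mem_comap.mpr (MonoidHom.mem_ker.mpr this)
  · have : (σmap n) (θmap n (bgen n)) = 1 := by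
      rw [θ_bgen]
      funext j
      show pi1 (DihedralGroup.sr 0) = 1
      decide
    exact Subgroup.mem_comap.mpr (MonoidHom.mem_ker.mpr this)
  · have : ((σmap n).comp (θmap n)) x = 1 :=
      Abelianization.commutator_subset_ker ((σmap n).comp (θmap n)) hx
    exact Subgroup.mem_comap.mpr (MonoidHom.mem_ker.mpr this)

lemma sup_le_ker (n : ℕ) : ⁅Rsub n, Rsub n⁆ ⊔ ⁅Ssub n, Ssub n⁆ ≤ (θmap n).ker := by
  apply sup_le
  · rw [Subgroup.commutator_le]
    intro g₁ h₁ g₂ h₂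
    rw [MonoidHom.mem_ker, map_commutatorElement]
    rw [commutatorElement_eq_one_iff_mul_comm]
    have c1 := MonoidHom.mem_ker.mp (Subgroup.mem_comap.mp (R_le n h₁))
    have c2 := MonoidHom.mem_ker.mp (Subgroup.mem_comap.mp (R_le n h₂))
    funext j
    exact pi2_comm _ _ (congrFun c1 j) (congrFun c2 j)
  · rw [Subgroup.commutator_le]
    intro g₁ h₁ g₂ h₂
    rw [MonoidHom.mem_ker, map_commutatorElement]
    rw [commutatorElement_eq_one_iff_mul_comm]
    have c1 := MonoidHom.mem_ker.mp (Subgroup.mem_comap.mp (S_le n h₁))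
    have c2 := MonoidHom.mem_ker.mp (Subgroup.mem_comap.mp (S_le n h₂))
    funext j
    exact pi1_comm _ _ (congrFun c1 j) (congrFun c2 j)

abbrev Nsub (n : ℕ) : Subgroup ↥(Rsub n ⊓ Ssub n) :=
  (⁅Rsub n, Rsub n⁆ ⊔ ⁅Ssub n, Ssub n⁆).subgroupOf (Rsub n ⊓ Ssub n)

abbrev Qt (n : ℕ) := ↥(Rsub n ⊓ Ssub n) ⧸ Nsub n

def ψmap (n : ℕ) : Qt n →* Gn n :=
  QuotientGroup.lift (Nsub n) ((θmap n).comp (Rsub n ⊓ Ssub n).subtype)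
    (fun x hx => by
      show θmap n (x : FG n) = 1
      exact sup_le_ker n (Subgroup.mem_subgroupOf.mp hx))

open commutatorElement

lemma commQ (n : ℕ) : ∀ x y : Qt n, x * y = y * x := by
  intro x y
  induction x using QuotientGroup.induction_on with | H u =>
  induction y using QuotientGroup.induction_on with | H v =>
  rw [← QuotientGroup.mk_mul, ← QuotientGroup.mk_mul, QuotientGroup.eq]
  rw [Subgroup.mem_subgroupOf]
  have h : (((u * v)⁻¹ * (v * u) : ↥(Rsub n ⊓ Ssub n)) : FG n)
      = ⁅(v : FG n)⁻¹, (u : FG n)⁻¹⁆ := by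
    push_cast
    rw [commutatorElement_def]
    group
  rw [h]
  exact le_sup_left (α := Subgroup (FG n))
    (Subgroup.commutator_mem_commutator (inv_mem v.2.1) (inv_mem u.2.1))

instance instCommQt (n : ℕ) : CommGroup (Qt n) :=
  { (inferInstanceAs (Group (Qt n)) : Group (Qt n)) with mul_comm := commQ n }

def celt (n : ℕ) (i : Fin n) : Qt n :=
  QuotientGroup.mk ⟨(agen n i)⁻¹ * (bgen n)⁻¹ * agen n i * bgen n, ab_mem n i⟩

lemma agen_mem_R (n : ℕ) (i : Fin n) : agen n i ∈ Rsub n :=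
  Subgroup.subset_normalClosure (Or.inl ⟨i, rfl⟩)

lemma agen_sq_mem_S (n : ℕ) (i : Fin n) : agen n i ^ 2 ∈ Ssub n :=
  Subgroup.subset_normalClosure (Or.inl (Or.inl ⟨i, rfl⟩))

lemma bgen_mem_S (n : ℕ) : bgen n ∈ Ssub n :=
  Subgroup.subset_normalClosure (Or.inl (Or.inr rfl))

lemma wrd_mem_comm (n : ℕ) (i : Fin n) :
    (agen n i)⁻¹ * (bgen n)⁻¹ * agen n i * bgen n ∈ commutator (FG n) := by
  have h := Subgroup.commutator_mem_commutator
    (Subgroup.mem_top (agen n i)⁻¹) (Subgroup.mem_top (bgen n)⁻¹)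
  rw [commutator_def]
  simpa [commutatorElement_def, mul_assoc] using h

lemma celt_sq (n : ℕ) (i : Fin n) : celt n i ^ 2 = 1 := by
  have : celt n i ^ 2 = QuotientGroup.mk
      ((⟨(agen n i)⁻¹ * (bgen n)⁻¹ * agen n i * bgen n, ab_mem n i⟩ : ↥(Rsub n ⊓ Ssub n)) ^ 2) := rfl
  rw [this, QuotientGroup.eq_one_iff, Subgroup.mem_subgroupOf]
  set a := agen n i
  set b := bgen n
  set w := a⁻¹ * b⁻¹ * a * b with hw
  have hval : (((⟨w, ab_mem n i⟩ : ↥(Rsub n ⊓ Ssub n)) ^ 2 : ↥(Rsub n ⊓ Ssub n)) : FG n) = w ^ 2 := rfl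
  rw [hval]
  have hid : w ^ 2 = ⁅w, a⁻¹⁆ * ⁅(a ^ 2)⁻¹, b⁻¹⁆ := by
    rw [commutatorElement_def, commutatorElement_def, hw, pow_two]
    group
  rw [hid]
  have hwR : w ∈ Rsub n := Subgroup.subset_normalClosure (Or.inr (wrd_mem_comm n i))
  refine mul_mem (le_sup_left (α := Subgroup (FG n))
      (Subgroup.commutator_mem_commutator hwR (inv_mem (agen_mem_R n i))))
    (le_sup_right (α := Subgroup (FG n))
      (Subgroup.commutator_mem_commutator (inv_mem (agen_sq_mem_S n i)) (inv_mem (bgen_mem_S n))))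

lemma ψ_celt (n : ℕ) (i : Fin n) :
    ψmap n (celt n i) = fun j => if j = i then DihedralGroup.r 2 else 1 := by
  show θmap n ((agen n i)⁻¹ * (bgen n)⁻¹ * agen n i * bgen n) = _
  rw [map_mul, map_mul, map_mul, map_inv, map_inv, θ_agen, θ_bgen]
  funext j
  show (fgen n (Sum.inl i) j)⁻¹ * (fgen n (Sum.inr ()) j)⁻¹ * fgen n (Sum.inl i) j
      * fgen n (Sum.inr ()) j = _
  show (if j = i then DihedralGroup.r 1 else 1)⁻¹ * (DihedralGroup.sr 0)⁻¹ *
      (if j = i then DihedralGroup.r 1 else 1) * DihedralGroup.sr 0 = _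
  split <;> decide

lemma ψ_prod (n : ℕ) (v : Fin n → ℕ) (s : Finset (Fin n)) :
    ψmap n (∏ i ∈ s, celt n i ^ v i)
      = fun j => if j ∈ s then DihedralGroup.r 2 ^ v j else 1 := by
  classical
  induction s using Finset.induction with
  | empty => funext j; simp
  | @insert a s ha ih =>
    rw [Finset.prod_insert ha, map_mul, map_pow, ψ_celt, ih]
    funext j
    rw [Pi.mul_apply, Pi.pow_apply]
    by_cases hja : j = a
    · subst hja
      have : j ∉ s := ha
      simp [this]
    · simp [hja, Finset.mem_insert]

lemma pow_zmod2_add {G : Type*} [Group G] {c : G} (h : c ^ 2 = 1) (a b : ZMod 2) :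
    c ^ ((a + b).val) = c ^ a.val * c ^ b.val := by
  have hmod : (a + b).val = (a.val + b.val) % 2 := by revert a b; decide
  rw [hmod, ← pow_add]
  conv_rhs => rw [← Nat.div_add_mod (a.val + b.val) 2]
  rw [pow_add, pow_mul, h, one_pow, one_mul]

def χmap (n : ℕ) : Multiplicative (Fin n → ZMod 2) →* Qt n where
  toFun x := ∏ i, celt n i ^ ((Multiplicative.toAdd x) i).val
  map_one' := by simp
  map_mul' x y := by
    show (∏ i, celt n i ^ ((Multiplicative.toAdd x + Multiplicative.toAdd y) i).val) = _
    rw [← Finset.prod_mul_distrib]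
    exact Finset.prod_congr rfl fun i _ => pow_zmod2_add (celt_sq n i) _ _

theorem stmt17 (n : ℕ) (hn : 1 ≤ n) :
    Nonempty
      ((Subgroup.closure
          {x : ↥(Rsub n ⊓ Ssub n) ⧸
              ((⁅Rsub n, Rsub n⁆ ⊔ ⁅Ssub n, Ssub n⁆).subgroupOf (Rsub n ⊓ Ssub n)) |
            ∃ i : Fin n, x = QuotientGroup.mk
              (⟨(agen n i)⁻¹ * (bgen n)⁻¹ * agen n i * bgen n, ab_mem n i⟩ :
                ↥(Rsub n ⊓ Ssub n))}) ≃*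
        Multiplicative (Fin n → ZMod 2)) := by
  classical
  let H : Subgroup (Qt n) := Subgroup.closure
          {x : ↥(Rsub n ⊓ Ssub n) ⧸
              ((⁅Rsub n, Rsub n⁆ ⊔ ⁅Ssub n, Ssub n⁆).subgroupOf (Rsub n ⊓ Ssub n)) |
            ∃ i : Fin n, x = QuotientGroup.mk
              (⟨(agen n i)⁻¹ * (bgen n)⁻¹ * agen n i * bgen n, ab_mem n i⟩ :
                ↥(Rsub n ⊓ Ssub n))}
  have hgen : ∀ i, celt n i ∈ H := fun i => Subgroup.subset_closure ⟨i, rfl⟩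
  have hmem : ∀ x, χmap n x ∈ H := fun x =>
    show (∏ i, celt n i ^ ((Multiplicative.toAdd x) i).val) ∈ H from
      Subgroup.prod_mem _ (fun i _ => Subgroup.pow_mem _ (hgen i) _)
  let χ' : Multiplicative (Fin n → ZMod 2) →* H := (χmap n).codRestrict H hmem
  have hinj : Function.Injective χ' := by
    rw [injective_iff_map_eq_one]
    intro x hx
    have h1 : χmap n x = 1 := congrArg Subtype.val hx
    have h2 : ψmap n (χmap n x) = 1 := by rw [h1, map_one]
    have h4 : χmap n x = ∏ i ∈ Finset.univ, celt n i ^ ((Multiplicative.toAdd x) i).val := rfl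
    rw [h4, ψ_prod n (fun i => ((Multiplicative.toAdd x) i).val) Finset.univ] at h2
    have h5 : ∀ j : Fin n, (DihedralGroup.r 2 : DihedralGroup 4)
        ^ ((Multiplicative.toAdd x) j).val = 1 := by
      intro j
      have := congrFun h2 j
      simpa using this
    have h6 : ∀ z : ZMod 2, (DihedralGroup.r 2 : DihedralGroup 4) ^ z.val = 1 → z = 0 := by
      decide
    exact Multiplicative.toAdd.injective (funext fun j => h6 _ (h5 j))
  have hrange : ∀ i, celt n i ∈ (χmap n).range := by
    intro i
    refine ⟨Multiplicative.ofAdd (Pi.single i 1), ?_⟩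
    show (∏ k, celt n k ^ ((Pi.single (M := fun _ => ZMod 2) i 1) k).val) = celt n i
    rw [Finset.prod_eq_single i]
    · rw [Pi.single_eq_same, show ZMod.val (1 : ZMod 2) = 1 from rfl, pow_one]
    · intro k _ hk
      rw [Pi.single_eq_of_ne hk]
      simp
    · intro h; exact absurd (Finset.mem_univ i) h
  have hle : H ≤ (χmap n).range := (Subgroup.closure_le _).mpr (by
    rintro x ⟨i, rfl⟩
    exact hrange i)
  have hsurj : Function.Surjective χ' := by
    rintro ⟨y, hy⟩
    obtain ⟨x, hx⟩ := hle hy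
    exact ⟨x, Subtype.ext hx⟩
  exact ⟨(MulEquiv.ofBijective χ' ⟨hinj, hsurj⟩).symm⟩
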